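/- Let K be a constant with 1/3 < K < 1, let μ = (3K−1)/(1−K), and let u : [0,1] → ℝ be continuous on [0,1], differentiable on (0,1], and satisfy u'(t) = K·μ·t^{2μ−1} / (t^{2μ} + (1−K)·e^{2u(t)}) for all t ∈ (0,1]. Then there exists a constant C > 0 such that |u(t) − u(0)| ≤ C·t^{2μ} and |u'(t)| ≤ C·t^{2μ−1} for all t ∈ (0,1]. -/

import Mathlib

open Real Set

/-- Proposition 3.1, estimate (3.12): any solution of the background ODE that is continuous
on `[0,1]` satisfies `|u(t) - u(0)| ≤ C t^(2μ)` and `|u'(t)| ≤ C t^(2μ-1)` on `(0,1]`. -/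
theorem stmt_1 (K μ : ℝ) (hK : 1/3 < K ∧ K < 1) (hμ : μ = (3*K - 1)/(1 - K))
    (u : ℝ → ℝ) (hcont : ContinuousOn u (Icc 0 1))
    (hODE : ∀ t ∈ Ioc (0:ℝ) 1,
      HasDerivAt u (K * μ * t ^ (2*μ - 1) / (t ^ (2*μ) + (1 - K) * Real.exp (2 * u t))) t) :
    ∃ C > 0, ∀ t ∈ Ioc (0:ℝ) 1,
      |u t - u 0| ≤ C * t ^ (2*μ) ∧ |deriv u t| ≤ C * t ^ (2*μ - 1) := by
  obtain ⟨hK1, hK2⟩ := hK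
  have h1K : (0:ℝ) < 1 - K := by linarith
  have hKpos : (0:ℝ) < K := by linarith
  have hμpos : 0 < μ := by
    rw [hμ]; exact div_pos (by linarith) h1K
  have h2μ : 0 < 2 * μ := by linarith
  -- minimum of u on [0,1]
  obtain ⟨x0, hx0, hmin⟩ := isCompact_Icc.exists_isMinOn (α := ℝ)
    (Set.nonempty_Icc.2 (by norm_num : (0:ℝ) ≤ 1)) hcont
  set m : ℝ := Real.exp (2 * u x0) with hm
  have hmpos : 0 < m := Real.exp_pos _
  set C1 : ℝ := K * μ / ((1 - K) * m) with hC1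
  have hC1pos : 0 < C1 := div_pos (mul_pos hKpos hμpos) (mul_pos h1K hmpos)
  -- pointwise derivative bound
  have hbound : ∀ t ∈ Ioc (0:ℝ) 1,
      0 ≤ K * μ * t ^ (2*μ - 1) / (t ^ (2*μ) + (1 - K) * Real.exp (2 * u t)) ∧
      K * μ * t ^ (2*μ - 1) / (t ^ (2*μ) + (1 - K) * Real.exp (2 * u t))
        ≤ C1 * t ^ (2*μ - 1) := by
    intro t ht
    have htpos : 0 < t := ht.1
    have htIcc : t ∈ Icc (0:ℝ) 1 := ⟨htpos.le, ht.2⟩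
    have hexp : m ≤ Real.exp (2 * u t) := by
      have := hmin htIcc
      exact Real.exp_le_exp.2 (by simp only [Set.mem_setOf_eq] at this; linarith)
    have hden : (1 - K) * m ≤ t ^ (2*μ) + (1 - K) * Real.exp (2 * u t) := by
      have h1 : (0:ℝ) ≤ t ^ (2*μ) := Real.rpow_nonneg htpos.le _
      nlinarith [mul_le_mul_of_nonneg_left hexp h1K.le]
    have hdenpos : 0 < (1 - K) * m := mul_pos h1K hmpos
    have hnum : 0 ≤ K * μ * t ^ (2*μ - 1) :=
      mul_nonneg (mul_pos hKpos hμpos).le (Real.rpow_nonneg htpos.le _)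
    constructor
    · exact div_nonneg hnum (by linarith)
    · have := div_le_div_of_nonneg_left hnum hdenpos hden
      calc K * μ * t ^ (2*μ - 1) / (t ^ (2*μ) + (1 - K) * Real.exp (2 * u t))
          ≤ K * μ * t ^ (2*μ - 1) / ((1 - K) * m) := this
        _ = C1 * t ^ (2*μ - 1) := by rw [hC1]; ring
  -- comparison function g
  set g : ℝ → ℝ := fun s => C1 / (2*μ) * s ^ (2*μ) with hg
  have hgderiv : ∀ s : ℝ, 0 < s → HasDerivAt g (C1 * s ^ (2*μ - 1)) s := by
    intro s hs
    have h1 : HasDerivAt (fun x : ℝ => x ^ (2*μ)) (2*μ * s ^ (2*μ - 1)) s :=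
      Real.hasDerivAt_rpow_const (Or.inl hs.ne')
    have h2 := h1.const_mul (C1 / (2*μ))
    have e : C1 / (2*μ) * (2*μ * s ^ (2*μ - 1)) = C1 * s ^ (2*μ - 1) := by
      rw [← mul_assoc, div_mul_cancel₀ _ h2μ.ne']
    exact h2.congr_deriv e
  have hgcont : ContinuousOn g (Icc 0 1) := by
    apply ContinuousOn.mul continuousOn_const
    exact continuousOn_id.rpow_const (fun x _ => Or.inr h2μ.le)
  -- u is monotone on [0,1]
  have hudiff : DifferentiableOn ℝ u (Ioo 0 1) := fun x hx =>
    ((hODE x ⟨hx.1, hx.2.le⟩).differentiableAt).differentiableWithinAt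
  have humono : MonotoneOn u (Icc 0 1) := by
    apply monotoneOn_of_deriv_nonneg (convex_Icc 0 1) hcont
    · rw [interior_Icc]; exact hudiff
    · intro x hx
      rw [interior_Icc] at hx
      have hx' : x ∈ Ioc (0:ℝ) 1 := ⟨hx.1, hx.2.le⟩
      rw [(hODE x hx').deriv]
      exact (hbound x hx').1
  -- u - g is antitone on [0,1]
  have hanti : AntitoneOn (fun s => u s - g s) (Icc 0 1) := by
    apply antitoneOn_of_deriv_nonpos (convex_Icc 0 1) (hcont.sub hgcont)
    · rw [interior_Icc]
      exact fun x hx => ((hudiff x hx).sub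
        ((hgderiv x hx.1).differentiableAt.differentiableWithinAt))
    · intro x hx
      rw [interior_Icc] at hx
      have hx' : x ∈ Ioc (0:ℝ) 1 := ⟨hx.1, hx.2.le⟩
      have hd : HasDerivAt (fun s => u s - g s)
          (K * μ * x ^ (2*μ - 1) / (x ^ (2*μ) + (1 - K) * Real.exp (2 * u x))
            - C1 * x ^ (2*μ - 1)) x :=
        (hODE x hx').sub (hgderiv x hx.1)
      change deriv (fun s => u s - g s) x ≤ 0
      rw [hd.deriv]
      have := (hbound x hx').2
      linarith
  refine ⟨C1 + C1 / (2*μ), by positivity, ?_⟩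
  intro t ht
  have htpos : 0 < t := ht.1
  have htIcc : t ∈ Icc (0:ℝ) 1 := ⟨htpos.le, ht.2⟩
  have h0Icc : (0:ℝ) ∈ Icc (0:ℝ) 1 := ⟨le_refl 0, by norm_num⟩
  have hg0 : g 0 = 0 := by
    simp [hg, Real.zero_rpow h2μ.ne']
  have hrp : (0:ℝ) ≤ t ^ (2*μ) := Real.rpow_nonneg htpos.le _
  have hrp' : (0:ℝ) ≤ t ^ (2*μ - 1) := Real.rpow_nonneg htpos.le _
  constructor
  · have h1 : u 0 ≤ u t := humono h0Icc htIcc htpos.le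
    have h2 : u t - g t ≤ u 0 - g 0 := hanti h0Icc htIcc htpos.le
    rw [hg0] at h2
    rw [abs_of_nonneg (by linarith)]
    have : u t - u 0 ≤ C1 / (2*μ) * t ^ (2*μ) := by
      simp only [hg] at h2; linarith
    calc u t - u 0 ≤ C1 / (2*μ) * t ^ (2*μ) := this
      _ ≤ (C1 + C1 / (2*μ)) * t ^ (2*μ) := by nlinarith
  · obtain ⟨h1, h2⟩ := hbound t ht
    rw [(hODE t ht).deriv, abs_of_nonneg h1]
    calc _ ≤ C1 * t ^ (2*μ - 1) := h2
      _ ≤ (C1 + C1 / (2*μ)) * t ^ (2*μ - 1) := by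
          apply mul_le_mul_of_nonneg_right _ hrp'
          have : 0 < C1 / (2*μ) := by positivity
          linarith
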